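/- The edge set of the Petersen graph cannot be partitioned into three perfect matchings. -/

import Mathlib

/-- The Petersen graph as the Kneser graph K(5,2): vertices are 2-element
subsets of a 5-element set, adjacent iff disjoint. -/
def petersen : SimpleGraph {s : Finset (Fin 5) // s.card = 2} where
  Adj s t := Disjoint s.val t.val
  symm := ⟨fun s t h => h.symm⟩
  loopless := by
    constructor
    intro s h
    rw [disjoint_self] at h
    have h2 := s.2
    rw [h] at h2
    simp at h2

abbrev PV := {s : Finset (Fin 5) // s.card = 2}

instance : DecidableRel petersen.Adj :=
  fun s t => inferInstanceAs (Decidable (Disjoint s.val t.val))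

def v01 : PV := ⟨{0, 1}, by decide⟩
def v02 : PV := ⟨{0, 2}, by decide⟩
def v03 : PV := ⟨{0, 3}, by decide⟩
def v04 : PV := ⟨{0, 4}, by decide⟩
def v12 : PV := ⟨{1, 2}, by decide⟩
def v13 : PV := ⟨{1, 3}, by decide⟩
def v14 : PV := ⟨{1, 4}, by decide⟩
def v23 : PV := ⟨{2, 3}, by decide⟩
def v24 : PV := ⟨{2, 4}, by decide⟩
def v34 : PV := ⟨{3, 4}, by decide⟩

lemma pet_distinct (M : Fin 3 → petersen.Subgraph) (hM : ∀ i, (M i).IsPerfectMatching)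
    {a b b' : PV} {i j : Fin 3} (hi : (M i).Adj a b) (hj : (M j).Adj a b')
    (hne : b ≠ b') : i ≠ j := by
  rintro rfl
  obtain ⟨w, -, hu⟩ := (hM i).1 ((hM i).2 a)
  exact hne ((hu b hi).trans (hu b' hj).symm)

set_option maxHeartbeats 2000000 in
set_option synthInstance.maxHeartbeats 2000000 in
set_option synthInstance.maxSize 10000 in
lemma pet_key : ¬ (∃ c0 : Fin 3, ∃ c1 : Fin 3, (c1 ≠ c0) ∧ ∃ c2 : Fin 3, (c2 ≠ c0 ∧ c2 ≠ c1) ∧ ∃ c3 : Fin 3, (c3 ≠ c2) ∧ ∃ c4 : Fin 3, (c4 ≠ c2 ∧ c4 ≠ c3) ∧ ∃ c5 : Fin 3, (c5 ≠ c3) ∧ ∃ c6 : Fin 3, (c6 ≠ c3 ∧ c6 ≠ c5) ∧ ∃ c7 : Fin 3, (c7 ≠ c1 ∧ c7 ≠ c5) ∧ ∃ c8 : Fin 3, (c8 ≠ c1 ∧ c8 ≠ c7) ∧ ∃ c9 : Fin 3, (c9 ≠ c4 ∧ c9 ≠ c8) ∧ ∃ c10 : Fin 3, (c10 ≠ c6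 ∧ c10 ≠ c8 ∧ c10 ≠ c9) ∧ ∃ c11 : Fin 3, (c11 ≠ c0 ∧ c11 ≠ c6 ∧ c11 ≠ c10) ∧ ∃ c12 : Fin 3, (c12 ≠ c4 ∧ c12 ≠ c9) ∧ ∃ c13 : Fin 3, (c13 ≠ c5 ∧ c13 ≠ c7 ∧ c13 ≠ c12) ∧ ∃ c14 : Fin 3, (c14 ≠ c0 ∧ c14 ≠ c11 ∧ c14 ≠ c12 ∧ c14 ≠ c13)) := by decide

/-- The edge set of the Petersen graph cannot be partitioned into three
perfect matchings. -/
theorem petersen_no_one_factorization :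
    ¬ ∃ M : Fin 3 → petersen.Subgraph,
        (∀ i, (M i).IsPerfectMatching) ∧
        (∀ e ∈ petersen.edgeSet, ∃! i, e ∈ (M i).edgeSet) := by
  rintro ⟨M, hM, hcover⟩
  obtain ⟨c0, hc0, -⟩ := hcover s(v01, v23) (petersen.mem_edgeSet.mpr (by decide))
  replace hc0 := SimpleGraph.Subgraph.mem_edgeSet.mp hc0
  obtain ⟨c1, hc1, -⟩ := hcover s(v01, v24) (petersen.mem_edgeSet.mpr (by decide))
  replace hc1 := SimpleGraph.Subgraph.mem_edgeSet.mp hc1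
  obtain ⟨c2, hc2, -⟩ := hcover s(v01, v34) (petersen.mem_edgeSet.mpr (by decide))
  replace hc2 := SimpleGraph.Subgraph.mem_edgeSet.mp hc2
  obtain ⟨c3, hc3, -⟩ := hcover s(v02, v34) (petersen.mem_edgeSet.mpr (by decide))
  replace hc3 := SimpleGraph.Subgraph.mem_edgeSet.mp hc3
  obtain ⟨c4, hc4, -⟩ := hcover s(v12, v34) (petersen.mem_edgeSet.mpr (by decide))
  replace hc4 := SimpleGraph.Subgraph.mem_edgeSet.mp hc4
  obtain ⟨c5, hc5, -⟩ := hcover s(v02, v13) (petersen.mem_edgeSet.mpr (by decide))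
  replace hc5 := SimpleGraph.Subgraph.mem_edgeSet.mp hc5
  obtain ⟨c6, hc6, -⟩ := hcover s(v02, v14) (petersen.mem_edgeSet.mpr (by decide))
  replace hc6 := SimpleGraph.Subgraph.mem_edgeSet.mp hc6
  obtain ⟨c7, hc7, -⟩ := hcover s(v13, v24) (petersen.mem_edgeSet.mpr (by decide))
  replace hc7 := SimpleGraph.Subgraph.mem_edgeSet.mp hc7
  obtain ⟨c8, hc8, -⟩ := hcover s(v03, v24) (petersen.mem_edgeSet.mpr (by decide))
  replace hc8 := SimpleGraph.Subgraph.mem_edgeSet.mp hc8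
  obtain ⟨c9, hc9, -⟩ := hcover s(v03, v12) (petersen.mem_edgeSet.mpr (by decide))
  replace hc9 := SimpleGraph.Subgraph.mem_edgeSet.mp hc9
  obtain ⟨c10, hc10, -⟩ := hcover s(v03, v14) (petersen.mem_edgeSet.mpr (by decide))
  replace hc10 := SimpleGraph.Subgraph.mem_edgeSet.mp hc10
  obtain ⟨c11, hc11, -⟩ := hcover s(v14, v23) (petersen.mem_edgeSet.mpr (by decide))
  replace hc11 := SimpleGraph.Subgraph.mem_edgeSet.mp hc11
  obtain ⟨c12, hc12, -⟩ := hcover s(v04, v12) (petersen.mem_edgeSet.mpr (by decide))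
  replace hc12 := SimpleGraph.Subgraph.mem_edgeSet.mp hc12
  obtain ⟨c13, hc13, -⟩ := hcover s(v04, v13) (petersen.mem_edgeSet.mpr (by decide))
  replace hc13 := SimpleGraph.Subgraph.mem_edgeSet.mp hc13
  obtain ⟨c14, hc14, -⟩ := hcover s(v04, v23) (petersen.mem_edgeSet.mpr (by decide))
  replace hc14 := SimpleGraph.Subgraph.mem_edgeSet.mp hc14
  exact pet_key ⟨c0, c1, pet_distinct M hM hc1 hc0 (by decide), c2, ⟨pet_distinct M hM hc2 hc0 (by decide), pet_distinct M hM hc2 hc1 (by decide)⟩, c3, pet_distinct M hM hc3.symm hc2.symm (by decide), c4, ⟨pet_distinct M hM hc4.symm hc2.symm (by decide), pet_distinct M hM hc4.symm hc3.symm (by decide)⟩, c5, pet_distinct M hM hc5 hc3 (by decide), c6, ⟨pet_distinct M hM hc6 hc3 (by decide), pet_distinct M hM hc6 hc5 (by decide)⟩, c7, ⟨pet_distinct M hM hc7.symm hc1.symm (by decide), pet_distinct M hM hc7 hc5.symm (by decide)⟩, c8, ⟨pet_distinct M hM hc8.symm hc1.symm (by decide), pet_distinct M hM hc8.symm hc7.symm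 (by decide)⟩, c9, ⟨pet_distinct M hM hc9.symm hc4 (by decide), pet_distinct M hM hc9 hc8 (by decide)⟩, c10, ⟨pet_distinct M hM hc10.symm hc6.symm (by decide), pet_distinct M hM hc10 hc8 (by decide), pet_distinct M hM hc10 hc9 (by decide)⟩, c11, ⟨pet_distinct M hM hc11.symm hc0.symm (by decide), pet_distinct M hM hc11 hc6.symm (by decide), pet_distinct M hM hc11 hc10.symm (by decide)⟩, c12, ⟨pet_distinct M hM hc12.symm hc4 (by decide), pet_distinct M hM hc12.symm hc9.symm (by decide)⟩, c13, ⟨pet_distinct M hM hc13.symm hc5.symm (by decide), pet_distinct M hM hc13.symm hc7 (by decide), pet_distinct M hM hc13 hc12 (by decide)⟩, c14, ⟨pet_distinct M hM hc14.symm hc0.symm (by decide), pet_distinct M hM hc14.symm hc11.symm (by decide), pet_distinct M hM hc14 hc12 (by decide), pet_distinct M hM hc14 hc13 (by decide)⟩⟩
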